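/- Let p ∈ (1,∞), m,n ∈ ℕ, and (M,d,+) a complete metric semigroup. Define on M^{(n+1)(m+1)} (indexed by pairs (i,j), 0≤i≤n, 0≤j≤m) the function ρ'_p(ξ,δ) = d(ξ_{00},δ_{00}) + (Σ_{i=1}^n d^p(ξ_{i0}+δ_{i-1,0}, ξ_{i-1,0}+δ_{i0}))^{1/p} + (Σ_{j=1}^m d^p(ξ_{0j}+δ_{0,j-1}, ξ_{0,j-1}+δ_{0j}))^{1/p} + (Σ_jΣ_i d^p(ξ_{ij}+ξ_{i-1,j-1}+δ_{i-1,j}+δ_{i,j-1}, ξ_{i-1,j}+ξ_{i,j-1}+δ_{ij}+δ_{i-1,j-1}))^{1/p}. Then ρ'_p is a metric and (M^{(n+1)(m+1)}, ρ'_p) is a complete metric space. -/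

import Mathlib

set_option maxHeartbeats 1000000


open Finset

variable {M : Type*} [MetricSpace M] [AddCommSemigroup M]

/-- The metric `ρ'_p` on `M^{(n+1)(m+1)}`, arrays being represented by functions
`ℕ → ℕ → M` restricted to indices `0 ≤ i ≤ n`, `0 ≤ j ≤ m`. -/
noncomputable def rhoArr (p : ℝ) (n m : ℕ) (ξ δ : ℕ → ℕ → M) : ℝ :=
  dist (ξ 0 0) (δ 0 0)
  + (∑ i ∈ range n, dist (ξ (i + 1) 0 + δ i 0) (ξ i 0 + δ (i + 1) 0) ^ p) ^ (1 / p)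
  + (∑ j ∈ range m, dist (ξ 0 (j + 1) + δ 0 j) (ξ 0 j + δ 0 (j + 1)) ^ p) ^ (1 / p)
  + (∑ j ∈ range m, ∑ i ∈ range n,
      dist (ξ (i + 1) (j + 1) + ξ i j + δ i (j + 1) + δ (i + 1) j)
           (ξ i (j + 1) + ξ (i + 1) j + δ (i + 1) (j + 1) + δ i j) ^ p) ^ (1 / p)

namespace RhoAux

variable {p : ℝ}

lemma lp_nonneg {ι : Type*} {s : Finset ι} {f : ι → ℝ} (hf : ∀ i ∈ s, 0 ≤ f i) :
    0 ≤ (∑ i ∈ s, f i ^ p) ^ (1 / p) :=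
  Real.rpow_nonneg (Finset.sum_nonneg fun i hi => Real.rpow_nonneg (hf i hi) p) _

lemma single_le_lp (hp : 1 < p) {ι : Type*} {s : Finset ι} {f : ι → ℝ} (hf : ∀ i ∈ s, 0 ≤ f i)
    {i : ι} (hi : i ∈ s) : f i ≤ (∑ j ∈ s, f j ^ p) ^ (1 / p) := by
  have hp0 : 0 < p := lt_trans one_pos hp
  have h1 : f i = (f i ^ p) ^ (1 / p) := by
    rw [one_div, Real.rpow_rpow_inv (hf i hi) hp0.ne']
  rw [h1]
  exact Real.rpow_le_rpow (Real.rpow_nonneg (hf i hi) p)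
    (Finset.single_le_sum (fun j hj => Real.rpow_nonneg (hf j hj) p) hi) (by positivity)

lemma lp_mono (hp : 1 < p) {ι : Type*} {s : Finset ι} {f g : ι → ℝ} (hf : ∀ i ∈ s, 0 ≤ f i)
    (hfg : ∀ i ∈ s, f i ≤ g i) :
    (∑ i ∈ s, f i ^ p) ^ (1 / p) ≤ (∑ i ∈ s, g i ^ p) ^ (1 / p) :=
  Real.rpow_le_rpow (Finset.sum_nonneg fun i hi => Real.rpow_nonneg (hf i hi) p)
    (Finset.sum_le_sum fun i hi =>
      Real.rpow_le_rpow (hf i hi) (hfg i hi) (le_of_lt (lt_trans one_pos hp)))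
    (by positivity)

lemma tendsto_rpow_zero {q : ℝ} (hq : 0 < q) :
    Filter.Tendsto (fun x : ℝ => x ^ q) (nhds 0) (nhds 0) := by
  have := (Real.continuousAt_rpow_const 0 q (Or.inr hq.le)).tendsto
  simpa [Real.zero_rpow hq.ne'] using this

section Semigroup

variable (hd : ∀ u v w : M, dist (u + w) (v + w) = dist u v)

include hd

lemma cancel {a b c : M} (h : a + c = b + c) : a = b := by
  have h0 : dist a b = 0 := by rw [← hd a b c, h, dist_self]
  exact dist_eq_zero.1 h0

lemma dist_add_add (a b c d : M) : dist (a + b) (c + d) ≤ dist a c + dist b d := by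
  calc dist (a + b) (c + d) ≤ dist (a + b) (c + b) + dist (c + b) (c + d) :=
        dist_triangle _ _ _
    _ = dist a c + dist b d := by rw [hd, add_comm c b, add_comm c d, hd]

lemma dist3 (a1 a2 a3 b1 b2 b3 : M) :
    dist (a1 + a2 + a3) (b1 + b2 + b3) ≤ dist a1 b1 + dist a2 b2 + dist a3 b3 :=
  le_trans (dist_add_add hd _ _ _ _)
    (add_le_add (dist_add_add hd _ _ _ _) le_rfl)

lemma dist4 (a1 a2 a3 a4 b1 b2 b3 b4 : M) :
    dist (a1 + a2 + a3 + a4) (b1 + b2 + b3 + b4) ≤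
      dist a1 b1 + dist a2 b2 + dist a3 b3 + dist a4 b4 :=
  le_trans (dist_add_add hd _ _ _ _)
    (add_le_add (dist3 hd _ _ _ _ _ _) le_rfl)

lemma two_tri (A a D d H e : M) :
    dist (A + d) (a + D) ≤ dist (A + e) (a + H) + dist (H + d) (e + D) := by
  have e1 : dist (A + d) (a + D) = dist ((A + e) + (H + d)) ((a + H) + (e + D)) := by
    rw [show (A + e) + (H + d) = (A + d) + (e + H) from by ac_rfl,
        show (a + H) + (e + D) = (a + D) + (e + H) from by ac_rfl, hd]
  rw [e1]
  exact dist_add_add hd _ _ _ _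

lemma drop (A B u v : M) : dist A B ≤ dist (A + u) (B + v) + dist u v := by
  calc dist A B = dist (A + u) (B + u) := (hd _ _ _).symm
    _ ≤ dist (A + u) (B + v) + dist (B + v) (B + u) := dist_triangle _ _ _
    _ = dist (A + u) (B + v) + dist u v := by
        rw [add_comm B v, add_comm B u, hd, dist_comm v u]

end Semigroup

lemma rho_nonneg (hp : 1 < p) (n m : ℕ) (ξ δ : ℕ → ℕ → M) : 0 ≤ rhoArr p n m ξ δ := by
  unfold rhoArr
  have h1 : 0 ≤ (∑ i ∈ range n, dist (ξ (i + 1) 0 + δ i 0) (ξ i 0 + δ (i + 1) 0) ^ p) ^ (1 / p) :=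
    lp_nonneg fun i _ => dist_nonneg
  have h2 : 0 ≤ (∑ j ∈ range m, dist (ξ 0 (j + 1) + δ 0 j) (ξ 0 j + δ 0 (j + 1)) ^ p) ^ (1 / p) :=
    lp_nonneg fun j _ => dist_nonneg
  have h3 : 0 ≤ (∑ j ∈ range m, ∑ i ∈ range n,
      dist (ξ (i + 1) (j + 1) + ξ i j + δ i (j + 1) + δ (i + 1) j)
           (ξ i (j + 1) + ξ (i + 1) j + δ (i + 1) (j + 1) + δ i j) ^ p) ^ (1 / p) :=
    Real.rpow_nonneg (Finset.sum_nonneg fun j _ => Finset.sum_nonneg fun i _ =>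
      Real.rpow_nonneg dist_nonneg p) _
  have h0 : (0:ℝ) ≤ dist (ξ 0 0) (δ 0 0) := dist_nonneg
  linarith


section Pointwise

variable (hd : ∀ u v w : M, dist (u + w) (v + w) = dist u v)
include hd

lemma pointwise (hp : 1 < p) (n m : ℕ) (ξ δ : ℕ → ℕ → M) :
    ∀ j ≤ m, ∀ i ≤ n, dist (ξ i j) (δ i j) ≤ 4 ^ (i + j) * rhoArr p n m ξ δ := by
  have hp0 : 0 < p := lt_trans one_pos hp
  have hρ0 : 0 ≤ rhoArr p n m ξ δ := rho_nonneg hp n m ξ δ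
  have N0 : (0:ℝ) ≤ dist (ξ 0 0) (δ 0 0) := dist_nonneg
  have N1 : 0 ≤ (∑ i ∈ range n,
      dist (ξ (i + 1) 0 + δ i 0) (ξ i 0 + δ (i + 1) 0) ^ p) ^ (1 / p) :=
    lp_nonneg fun _ _ => dist_nonneg
  have N2 : 0 ≤ (∑ j ∈ range m,
      dist (ξ 0 (j + 1) + δ 0 j) (ξ 0 j + δ 0 (j + 1)) ^ p) ^ (1 / p) :=
    lp_nonneg fun _ _ => dist_nonneg
  have N3 : 0 ≤ (∑ j ∈ range m, ∑ i ∈ range n,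
      dist (ξ (i + 1) (j + 1) + ξ i j + δ i (j + 1) + δ (i + 1) j)
           (ξ i (j + 1) + ξ (i + 1) j + δ (i + 1) (j + 1) + δ i j) ^ p) ^ (1 / p) :=
    Real.rpow_nonneg (Finset.sum_nonneg fun j _ => Finset.sum_nonneg fun i _ =>
      Real.rpow_nonneg dist_nonneg p) _
  have hb0 : dist (ξ 0 0) (δ 0 0) ≤ rhoArr p n m ξ δ := by
    unfold rhoArr; linarith
  have hbrow : ∀ i, i < n →
      dist (ξ (i + 1) 0 + δ i 0) (ξ i 0 + δ (i + 1) 0) ≤ rhoArr p n m ξ δ := by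
    intro i hi
    have h := single_le_lp hp (s := range n)
      (f := fun k => dist (ξ (k + 1) 0 + δ k 0) (ξ k 0 + δ (k + 1) 0))
      (fun _ _ => dist_nonneg) (mem_range.2 hi)
    unfold rhoArr; linarith
  have hbcol : ∀ j, j < m →
      dist (ξ 0 (j + 1) + δ 0 j) (ξ 0 j + δ 0 (j + 1)) ≤ rhoArr p n m ξ δ := by
    intro j hj
    have h := single_le_lp hp (s := range m)
      (f := fun k => dist (ξ 0 (k + 1) + δ 0 k) (ξ 0 k + δ 0 (k + 1)))
      (fun _ _ => dist_nonneg) (mem_range.2 hj)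
    unfold rhoArr; linarith
  have hbint : ∀ j, j < m → ∀ i, i < n →
      dist (ξ (i + 1) (j + 1) + ξ i j + δ i (j + 1) + δ (i + 1) j)
           (ξ i (j + 1) + ξ (i + 1) j + δ (i + 1) (j + 1) + δ i j) ≤ rhoArr p n m ξ δ := by
    intro j hj i hi
    set f : ℕ → ℕ → ℝ := fun j i =>
      dist (ξ (i + 1) (j + 1) + ξ i j + δ i (j + 1) + δ (i + 1) j)
           (ξ i (j + 1) + ξ (i + 1) j + δ (i + 1) (j + 1) + δ i j) with hf
    have ha : f j i ^ p ≤ ∑ i ∈ range n, f j i ^ p :=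
      Finset.single_le_sum (f := fun k => f j k ^ p)
        (fun k _ => Real.rpow_nonneg dist_nonneg p) (mem_range.2 hi)
    have hb : (∑ i ∈ range n, f j i ^ p) ≤ ∑ j ∈ range m, ∑ i ∈ range n, f j i ^ p :=
      Finset.single_le_sum (f := fun l => ∑ i ∈ range n, f l i ^ p)
        (fun k _ => Finset.sum_nonneg fun l _ => Real.rpow_nonneg dist_nonneg p)
        (mem_range.2 hj)
    have hc : f j i ≤ (∑ j ∈ range m, ∑ i ∈ range n, f j i ^ p) ^ (1 / p) := by
      calc f j i = (f j i ^ p) ^ (1 / p) := by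
            rw [one_div, Real.rpow_rpow_inv dist_nonneg hp0.ne']
        _ ≤ (∑ j ∈ range m, ∑ i ∈ range n, f j i ^ p) ^ (1 / p) :=
            Real.rpow_le_rpow (Real.rpow_nonneg dist_nonneg p) (le_trans ha hb) (by positivity)
    rw [hf] at hc
    simp only at hc
    unfold rhoArr; linarith
  intro j
  induction j with
  | zero =>
    intro _ i
    induction i with
    | zero => intro _; simpa using hb0
    | succ i ih =>
      intro hi1
      have hii : i ≤ n := Nat.le_of_succ_le hi1
      have key := drop hd (ξ (i + 1) 0) (δ (i + 1) 0) (δ i 0) (ξ i 0)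
      rw [add_comm (δ (i + 1) 0) (ξ i 0), dist_comm (δ i 0) (ξ i 0)] at key
      have hb := hbrow i hi1
      have hih := ih hii
      have h4 : (1:ℝ) ≤ 4 ^ (i + 0) := one_le_pow₀ (by norm_num)
      have h1k : rhoArr p n m ξ δ ≤ 4 ^ (i + 0) * rhoArr p n m ξ δ := by
        nlinarith
      have hkρ : (0:ℝ) ≤ 4 ^ (i + 0) * rhoArr p n m ξ δ := by positivity
      have hps : (4:ℝ) ^ (i + 1 + 0) = 4 ^ (i + 0) * 4 := by
        ring
      rw [hps]
      linarith
  | succ j ihj =>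
    intro hj1 i
    have hjj : j ≤ m := Nat.le_of_succ_le hj1
    induction i with
    | zero =>
      intro _
      have key := drop hd (ξ 0 (j + 1)) (δ 0 (j + 1)) (δ 0 j) (ξ 0 j)
      rw [add_comm (δ 0 (j + 1)) (ξ 0 j), dist_comm (δ 0 j) (ξ 0 j)] at key
      have hb := hbcol j hj1
      have hih := ihj hjj 0 (Nat.zero_le _)
      have h4 : (1:ℝ) ≤ 4 ^ (0 + j) := one_le_pow₀ (by norm_num)
      have h1k : rhoArr p n m ξ δ ≤ 4 ^ (0 + j) * rhoArr p n m ξ δ := by nlinarith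
      have hkρ : (0:ℝ) ≤ 4 ^ (0 + j) * rhoArr p n m ξ δ := by positivity
      have hps : (4:ℝ) ^ (0 + (j + 1)) = 4 ^ (0 + j) * 4 := by
        ring
      rw [hps]
      linarith
    | succ i ihi =>
      intro hi1
      have hii : i ≤ n := Nat.le_of_succ_le hi1
      have key := drop hd (ξ (i + 1) (j + 1)) (δ (i + 1) (j + 1))
        (ξ i j + δ i (j + 1) + δ (i + 1) j) (δ i j + ξ i (j + 1) + ξ (i + 1) j)
      rw [show ξ (i + 1) (j + 1) + (ξ i j + δ i (j + 1) + δ (i + 1) j)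
            = ξ (i + 1) (j + 1) + ξ i j + δ i (j + 1) + δ (i + 1) j from by ac_rfl,
          show δ (i + 1) (j + 1) + (δ i j + ξ i (j + 1) + ξ (i + 1) j)
            = ξ i (j + 1) + ξ (i + 1) j + δ (i + 1) (j + 1) + δ i j from by ac_rfl] at key
      have key2 := dist3 hd (ξ i j) (δ i (j + 1)) (δ (i + 1) j)
        (δ i j) (ξ i (j + 1)) (ξ (i + 1) j)
      rw [dist_comm (δ i (j + 1)), dist_comm (δ (i + 1) j)] at key2
      have ht := hbint j hj1 i hi1
      have hA := ihj hjj i hii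
      have hB := ihi hii
      have hC := ihj hjj (i + 1) hi1
      have h4 : (1:ℝ) ≤ 4 ^ (i + j) := one_le_pow₀ (by norm_num)
      have h1k : rhoArr p n m ξ δ ≤ 4 ^ (i + j) * rhoArr p n m ξ δ := by nlinarith
      have hkρ : (0:ℝ) ≤ 4 ^ (i + j) * rhoArr p n m ξ δ := by positivity
      have h01 : (4:ℝ) ^ (i + (j + 1)) = 4 ^ (i + j) * 4 := by
        ring
      have h10 : (4:ℝ) ^ (i + 1 + j) = 4 ^ (i + j) * 4 := by
        ring
      have hps : (4:ℝ) ^ (i + 1 + (j + 1)) = 4 ^ (i + j) * 16 := by ring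
      rw [h01] at hB
      rw [h10] at hC
      rw [hps]
      linarith

end Pointwise

end RhoAux

/-- For `p ∈ (1,∞)` and a complete metric semigroup `M`, `ρ'_p` is a metric on
`M^{(n+1)(m+1)}` and the resulting metric space is complete. -/
theorem rhoArr_complete_metric [CompleteSpace M] (p : ℝ) (hp : 1 < p) (n m : ℕ)
    (hd : ∀ u v w : M, dist (u + w) (v + w) = dist u v) :
    (∀ ξ δ : ℕ → ℕ → M, 0 ≤ rhoArr p n m ξ δ)
    ∧ (∀ ξ δ : ℕ → ℕ → M,
        (rhoArr p n m ξ δ = 0 ↔ ∀ i ≤ n, ∀ j ≤ m, ξ i j = δ i j))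
    ∧ (∀ ξ δ : ℕ → ℕ → M, rhoArr p n m ξ δ = rhoArr p n m δ ξ)
    ∧ (∀ ξ δ h : ℕ → ℕ → M, rhoArr p n m ξ δ ≤ rhoArr p n m ξ h + rhoArr p n m h δ)
    ∧ (∀ F : ℕ → ℕ → ℕ → M,
        (∀ ε > (0:ℝ), ∃ N, ∀ u ≥ N, ∀ v ≥ N, rhoArr p n m (F u) (F v) < ε) →
        ∃ ξ : ℕ → ℕ → M,
          Filter.Tendsto (fun u => rhoArr p n m (F u) ξ) Filter.atTop (nhds 0)) := by
  have hp0 : 0 < p := lt_trans one_pos hp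
  have hpne : p ≠ 0 := hp0.ne'
  have hip0 : (0:ℝ) < 1 / p := by positivity
  have hipne : (1:ℝ) / p ≠ 0 := hip0.ne'
  refine ⟨fun ξ δ => RhoAux.rho_nonneg hp n m ξ δ, ?_, ?_, ?_, ?_⟩
  -- zero iff equal on the rectangle
  · intro ξ δ
    constructor
    · intro hz
      have N0 : (0:ℝ) ≤ dist (ξ 0 0) (δ 0 0) := dist_nonneg
      have N1 : 0 ≤ (∑ i ∈ range n,
          dist (ξ (i + 1) 0 + δ i 0) (ξ i 0 + δ (i + 1) 0) ^ p) ^ (1 / p) :=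
        RhoAux.lp_nonneg fun _ _ => dist_nonneg
      have N2 : 0 ≤ (∑ j ∈ range m,
          dist (ξ 0 (j + 1) + δ 0 j) (ξ 0 j + δ 0 (j + 1)) ^ p) ^ (1 / p) :=
        RhoAux.lp_nonneg fun _ _ => dist_nonneg
      have N3 : 0 ≤ (∑ j ∈ range m, ∑ i ∈ range n,
          dist (ξ (i + 1) (j + 1) + ξ i j + δ i (j + 1) + δ (i + 1) j)
               (ξ i (j + 1) + ξ (i + 1) j + δ (i + 1) (j + 1) + δ i j) ^ p) ^ (1 / p) :=
        Real.rpow_nonneg (Finset.sum_nonneg fun j _ => Finset.sum_nonneg fun i _ =>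
          Real.rpow_nonneg dist_nonneg p) _
      unfold rhoArr at hz
      have eA : dist (ξ 0 0) (δ 0 0) = 0 := by linarith
      have eB : (∑ i ∈ range n,
          dist (ξ (i + 1) 0 + δ i 0) (ξ i 0 + δ (i + 1) 0) ^ p) ^ (1 / p) = 0 := by linarith
      have eC : (∑ j ∈ range m,
          dist (ξ 0 (j + 1) + δ 0 j) (ξ 0 j + δ 0 (j + 1)) ^ p) ^ (1 / p) = 0 := by linarith
      have eD : (∑ j ∈ range m, ∑ i ∈ range n,
          dist (ξ (i + 1) (j + 1) + ξ i j + δ i (j + 1) + δ (i + 1) j)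
               (ξ i (j + 1) + ξ (i + 1) j + δ (i + 1) (j + 1) + δ i j) ^ p) ^ (1 / p) = 0 := by
        linarith
      have hrow : ∀ i, i < n → ξ (i + 1) 0 + δ i 0 = ξ i 0 + δ (i + 1) 0 := by
        intro i hi
        have hs := (Real.rpow_eq_zero
          (Finset.sum_nonneg fun k _ => Real.rpow_nonneg dist_nonneg p) hipne).1 eB
        have h1 := (Finset.sum_eq_zero_iff_of_nonneg
          (fun k _ => Real.rpow_nonneg dist_nonneg p)).1 hs i (mem_range.2 hi)
        exact dist_eq_zero.1 ((Real.rpow_eq_zero dist_nonneg hpne).1 h1)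
      have hcol : ∀ j, j < m → ξ 0 (j + 1) + δ 0 j = ξ 0 j + δ 0 (j + 1) := by
        intro j hj
        have hs := (Real.rpow_eq_zero
          (Finset.sum_nonneg fun k _ => Real.rpow_nonneg dist_nonneg p) hipne).1 eC
        have h1 := (Finset.sum_eq_zero_iff_of_nonneg
          (fun k _ => Real.rpow_nonneg dist_nonneg p)).1 hs j (mem_range.2 hj)
        exact dist_eq_zero.1 ((Real.rpow_eq_zero dist_nonneg hpne).1 h1)
      have hint : ∀ j, j < m → ∀ i, i < n →
          ξ (i + 1) (j + 1) + ξ i j + δ i (j + 1) + δ (i + 1) j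
            = ξ i (j + 1) + ξ (i + 1) j + δ (i + 1) (j + 1) + δ i j := by
        intro j hj i hi
        have hs := (Real.rpow_eq_zero
          (Finset.sum_nonneg fun k _ => Finset.sum_nonneg fun l _ =>
            Real.rpow_nonneg dist_nonneg p) hipne).1 eD
        have hj1 := (Finset.sum_eq_zero_iff_of_nonneg
          (fun k _ => Finset.sum_nonneg fun l _ => Real.rpow_nonneg dist_nonneg p)).1 hs
          j (mem_range.2 hj)
        have h1 := (Finset.sum_eq_zero_iff_of_nonneg
          (fun k _ => Real.rpow_nonneg dist_nonneg p)).1 hj1 i (mem_range.2 hi)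
        exact dist_eq_zero.1 ((Real.rpow_eq_zero dist_nonneg hpne).1 h1)
      have key : ∀ j ≤ m, ∀ i ≤ n, ξ i j = δ i j := by
        intro j
        induction j with
        | zero =>
          intro _ i
          induction i with
          | zero => intro _; exact dist_eq_zero.1 eA
          | succ i ih =>
            intro hi1
            have e := hrow i hi1
            rw [ih (Nat.le_of_succ_le hi1)] at e
            exact RhoAux.cancel hd (e.trans (add_comm _ _))
        | succ j ihj =>
          intro hj1 i
          have hjj := Nat.le_of_succ_le hj1
          induction i with
          | zero =>
            intro _
            have e := hcol j hj1
            rw [ihj hjj 0 (Nat.zero_le _)] at e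
            exact RhoAux.cancel hd (e.trans (add_comm _ _))
          | succ i ihi =>
            intro hi1
            have hii := Nat.le_of_succ_le hi1
            have e := hint j hj1 i hi1
            rw [ihj hjj i hii, ihi hii, ihj hjj (i + 1) hi1] at e
            refine RhoAux.cancel hd (c := δ i j + δ i (j + 1) + δ (i + 1) j) ?_
            rw [show ξ (i + 1) (j + 1) + (δ i j + δ i (j + 1) + δ (i + 1) j)
                  = ξ (i + 1) (j + 1) + δ i j + δ i (j + 1) + δ (i + 1) j from by ac_rfl, e]
            ac_rfl
      exact fun i hi j hj => key j hj i hi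
    · intro heq
      unfold rhoArr
      have e1 : dist (ξ 0 0) (δ 0 0) = 0 := by
        rw [heq 0 (Nat.zero_le _) 0 (Nat.zero_le _), dist_self]
      have e2 : (∑ i ∈ range n,
          dist (ξ (i + 1) 0 + δ i 0) (ξ i 0 + δ (i + 1) 0) ^ p) = 0 :=
        Finset.sum_eq_zero fun i hi => by
          have hi' := mem_range.1 hi
          rw [heq (i + 1) hi' 0 (Nat.zero_le _), heq i (le_of_lt hi') 0 (Nat.zero_le _),
            add_comm (δ i 0) (δ (i + 1) 0), dist_self, Real.zero_rpow hpne]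
      have e3 : (∑ j ∈ range m,
          dist (ξ 0 (j + 1) + δ 0 j) (ξ 0 j + δ 0 (j + 1)) ^ p) = 0 :=
        Finset.sum_eq_zero fun j hj => by
          have hj' := mem_range.1 hj
          rw [heq 0 (Nat.zero_le _) (j + 1) hj', heq 0 (Nat.zero_le _) j (le_of_lt hj'),
            add_comm (δ 0 j) (δ 0 (j + 1)), dist_self, Real.zero_rpow hpne]
      have e4 : (∑ j ∈ range m, ∑ i ∈ range n,
          dist (ξ (i + 1) (j + 1) + ξ i j + δ i (j + 1) + δ (i + 1) j)
               (ξ i (j + 1) + ξ (i + 1) j + δ (i + 1) (j + 1) + δ i j) ^ p) = 0 :=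
        Finset.sum_eq_zero fun j hj => Finset.sum_eq_zero fun i hi => by
          have hj' := mem_range.1 hj
          have hi' := mem_range.1 hi
          rw [heq (i + 1) hi' (j + 1) hj', heq i (le_of_lt hi') (j + 1) hj',
            heq i (le_of_lt hi') j (le_of_lt hj'), heq (i + 1) hi' j (le_of_lt hj'),
            show (δ i (j + 1) + δ (i + 1) j + δ (i + 1) (j + 1) + δ i j : M)
              = δ (i + 1) (j + 1) + δ i j + δ i (j + 1) + δ (i + 1) j from by ac_rfl,
            dist_self, Real.zero_rpow hpne]
      rw [e1, e2, e3, e4, Real.zero_rpow hipne]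
      norm_num
  -- symmetry
  · intro ξ δ
    unfold rhoArr
    have e1 : dist (ξ 0 0) (δ 0 0) = dist (δ 0 0) (ξ 0 0) := dist_comm _ _
    have e2 : (∑ i ∈ range n, dist (ξ (i + 1) 0 + δ i 0) (ξ i 0 + δ (i + 1) 0) ^ p)
        = ∑ i ∈ range n, dist (δ (i + 1) 0 + ξ i 0) (δ i 0 + ξ (i + 1) 0) ^ p :=
      Finset.sum_congr rfl fun i _ => by
        rw [dist_comm, add_comm (ξ i 0), add_comm (ξ (i + 1) 0)]
    have e3 : (∑ j ∈ range m, dist (ξ 0 (j + 1) + δ 0 j) (ξ 0 j + δ 0 (j + 1)) ^ p)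
        = ∑ j ∈ range m, dist (δ 0 (j + 1) + ξ 0 j) (δ 0 j + ξ 0 (j + 1)) ^ p :=
      Finset.sum_congr rfl fun j _ => by
        rw [dist_comm, add_comm (ξ 0 j), add_comm (ξ 0 (j + 1))]
    have e4 : (∑ j ∈ range m, ∑ i ∈ range n,
          dist (ξ (i + 1) (j + 1) + ξ i j + δ i (j + 1) + δ (i + 1) j)
               (ξ i (j + 1) + ξ (i + 1) j + δ (i + 1) (j + 1) + δ i j) ^ p)
        = ∑ j ∈ range m, ∑ i ∈ range n,
          dist (δ (i + 1) (j + 1) + δ i j + ξ i (j + 1) + ξ (i + 1) j)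
               (δ i (j + 1) + δ (i + 1) j + ξ (i + 1) (j + 1) + ξ i j) ^ p :=
      Finset.sum_congr rfl fun j _ => Finset.sum_congr rfl fun i _ => by
        rw [dist_comm,
          show (ξ i (j + 1) + ξ (i + 1) j + δ (i + 1) (j + 1) + δ i j : M)
            = δ (i + 1) (j + 1) + δ i j + ξ i (j + 1) + ξ (i + 1) j from by ac_rfl,
          show (ξ (i + 1) (j + 1) + ξ i j + δ i (j + 1) + δ (i + 1) j : M)
            = δ i (j + 1) + δ (i + 1) j + ξ (i + 1) (j + 1) + ξ i j from by ac_rfl]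
    rw [e1, e2, e3, e4]
  -- triangle inequality
  · intro ξ δ h
    unfold rhoArr
    have T1 := dist_triangle (ξ 0 0) (h 0 0) (δ 0 0)
    have T2 : (∑ i ∈ range n, dist (ξ (i + 1) 0 + δ i 0) (ξ i 0 + δ (i + 1) 0) ^ p) ^ (1 / p)
        ≤ (∑ i ∈ range n, dist (ξ (i + 1) 0 + h i 0) (ξ i 0 + h (i + 1) 0) ^ p) ^ (1 / p)
          + (∑ i ∈ range n, dist (h (i + 1) 0 + δ i 0) (h i 0 + δ (i + 1) 0) ^ p) ^ (1 / p) := by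
      calc (∑ i ∈ range n, dist (ξ (i + 1) 0 + δ i 0) (ξ i 0 + δ (i + 1) 0) ^ p) ^ (1 / p)
          ≤ (∑ i ∈ range n, (dist (ξ (i + 1) 0 + h i 0) (ξ i 0 + h (i + 1) 0)
              + dist (h (i + 1) 0 + δ i 0) (h i 0 + δ (i + 1) 0)) ^ p) ^ (1 / p) :=
            RhoAux.lp_mono hp (fun _ _ => dist_nonneg)
              (fun i _ => RhoAux.two_tri hd _ _ _ _ _ _)
        _ ≤ _ := Real.Lp_add_le_of_nonneg _ hp.le
              (fun _ _ => dist_nonneg) (fun _ _ => dist_nonneg)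
    have T3 : (∑ j ∈ range m, dist (ξ 0 (j + 1) + δ 0 j) (ξ 0 j + δ 0 (j + 1)) ^ p) ^ (1 / p)
        ≤ (∑ j ∈ range m, dist (ξ 0 (j + 1) + h 0 j) (ξ 0 j + h 0 (j + 1)) ^ p) ^ (1 / p)
          + (∑ j ∈ range m, dist (h 0 (j + 1) + δ 0 j) (h 0 j + δ 0 (j + 1)) ^ p) ^ (1 / p) := by
      calc (∑ j ∈ range m, dist (ξ 0 (j + 1) + δ 0 j) (ξ 0 j + δ 0 (j + 1)) ^ p) ^ (1 / p)
          ≤ (∑ j ∈ range m, (dist (ξ 0 (j + 1) + h 0 j) (ξ 0 j + h 0 (j + 1))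
              + dist (h 0 (j + 1) + δ 0 j) (h 0 j + δ 0 (j + 1))) ^ p) ^ (1 / p) :=
            RhoAux.lp_mono hp (fun _ _ => dist_nonneg)
              (fun j _ => RhoAux.two_tri hd _ _ _ _ _ _)
        _ ≤ _ := Real.Lp_add_le_of_nonneg _ hp.le
              (fun _ _ => dist_nonneg) (fun _ _ => dist_nonneg)
    have T4 : (∑ j ∈ range m, ∑ i ∈ range n,
          dist (ξ (i + 1) (j + 1) + ξ i j + δ i (j + 1) + δ (i + 1) j)
               (ξ i (j + 1) + ξ (i + 1) j + δ (i + 1) (j + 1) + δ i j) ^ p) ^ (1 / p)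
        ≤ (∑ j ∈ range m, ∑ i ∈ range n,
            dist (ξ (i + 1) (j + 1) + ξ i j + h i (j + 1) + h (i + 1) j)
                 (ξ i (j + 1) + ξ (i + 1) j + h (i + 1) (j + 1) + h i j) ^ p) ^ (1 / p)
          + (∑ j ∈ range m, ∑ i ∈ range n,
            dist (h (i + 1) (j + 1) + h i j + δ i (j + 1) + δ (i + 1) j)
                 (h i (j + 1) + h (i + 1) j + δ (i + 1) (j + 1) + δ i j) ^ p) ^ (1 / p) := by
      rw [show (∑ j ∈ range m, ∑ i ∈ range n,
          dist (ξ (i + 1) (j + 1) + ξ i j + δ i (j + 1) + δ (i + 1) j)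
               (ξ i (j + 1) + ξ (i + 1) j + δ (i + 1) (j + 1) + δ i j) ^ p)
          = ∑ x ∈ range m ×ˢ range n,
          dist (ξ (x.2 + 1) (x.1 + 1) + ξ x.2 x.1 + δ x.2 (x.1 + 1) + δ (x.2 + 1) x.1)
               (ξ x.2 (x.1 + 1) + ξ (x.2 + 1) x.1 + δ (x.2 + 1) (x.1 + 1) + δ x.2 x.1) ^ p
          from (Finset.sum_product (range m) (range n) (fun x =>
          dist (ξ (x.2 + 1) (x.1 + 1) + ξ x.2 x.1 + δ x.2 (x.1 + 1) + δ (x.2 + 1) x.1)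
               (ξ x.2 (x.1 + 1) + ξ (x.2 + 1) x.1 + δ (x.2 + 1) (x.1 + 1) + δ x.2 x.1) ^ p)).symm,
        show (∑ j ∈ range m, ∑ i ∈ range n,
          dist (ξ (i + 1) (j + 1) + ξ i j + h i (j + 1) + h (i + 1) j)
               (ξ i (j + 1) + ξ (i + 1) j + h (i + 1) (j + 1) + h i j) ^ p)
          = ∑ x ∈ range m ×ˢ range n,
          dist (ξ (x.2 + 1) (x.1 + 1) + ξ x.2 x.1 + h x.2 (x.1 + 1) + h (x.2 + 1) x.1)
               (ξ x.2 (x.1 + 1) + ξ (x.2 + 1) x.1 + h (x.2 + 1) (x.1 + 1) + h x.2 x.1) ^ p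
          from (Finset.sum_product (range m) (range n) (fun x =>
          dist (ξ (x.2 + 1) (x.1 + 1) + ξ x.2 x.1 + h x.2 (x.1 + 1) + h (x.2 + 1) x.1)
               (ξ x.2 (x.1 + 1) + ξ (x.2 + 1) x.1 + h (x.2 + 1) (x.1 + 1) + h x.2 x.1) ^ p)).symm,
        show (∑ j ∈ range m, ∑ i ∈ range n,
          dist (h (i + 1) (j + 1) + h i j + δ i (j + 1) + δ (i + 1) j)
               (h i (j + 1) + h (i + 1) j + δ (i + 1) (j + 1) + δ i j) ^ p)
          = ∑ x ∈ range m ×ˢ range n,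
          dist (h (x.2 + 1) (x.1 + 1) + h x.2 x.1 + δ x.2 (x.1 + 1) + δ (x.2 + 1) x.1)
               (h x.2 (x.1 + 1) + h (x.2 + 1) x.1 + δ (x.2 + 1) (x.1 + 1) + δ x.2 x.1) ^ p
          from (Finset.sum_product (range m) (range n) (fun x =>
          dist (h (x.2 + 1) (x.1 + 1) + h x.2 x.1 + δ x.2 (x.1 + 1) + δ (x.2 + 1) x.1)
               (h x.2 (x.1 + 1) + h (x.2 + 1) x.1 + δ (x.2 + 1) (x.1 + 1) + δ x.2 x.1) ^ p)).symm]
      calc (∑ x ∈ range m ×ˢ range n,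
          dist (ξ (x.2 + 1) (x.1 + 1) + ξ x.2 x.1 + δ x.2 (x.1 + 1) + δ (x.2 + 1) x.1)
               (ξ x.2 (x.1 + 1) + ξ (x.2 + 1) x.1 + δ (x.2 + 1) (x.1 + 1) + δ x.2 x.1) ^ p)
            ^ (1 / p)
          ≤ (∑ x ∈ range m ×ˢ range n,
            ((dist (ξ (x.2 + 1) (x.1 + 1) + ξ x.2 x.1 + h x.2 (x.1 + 1) + h (x.2 + 1) x.1)
                 (ξ x.2 (x.1 + 1) + ξ (x.2 + 1) x.1 + h (x.2 + 1) (x.1 + 1) + h x.2 x.1))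
            + dist (h (x.2 + 1) (x.1 + 1) + h x.2 x.1 + δ x.2 (x.1 + 1) + δ (x.2 + 1) x.1)
                 (h x.2 (x.1 + 1) + h (x.2 + 1) x.1 + δ (x.2 + 1) (x.1 + 1) + δ x.2 x.1)) ^ p)
            ^ (1 / p) := by
            refine RhoAux.lp_mono hp (fun _ _ => dist_nonneg) (fun x _ => ?_)
            simpa only [← add_assoc] using RhoAux.two_tri hd
              (ξ (x.2 + 1) (x.1 + 1) + ξ x.2 x.1) (ξ x.2 (x.1 + 1) + ξ (x.2 + 1) x.1)
              (δ (x.2 + 1) (x.1 + 1) + δ x.2 x.1) (δ x.2 (x.1 + 1) + δ (x.2 + 1) x.1)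
              (h (x.2 + 1) (x.1 + 1) + h x.2 x.1) (h x.2 (x.1 + 1) + h (x.2 + 1) x.1)
        _ ≤ _ := Real.Lp_add_le_of_nonneg _ hp.le
              (fun _ _ => dist_nonneg) (fun _ _ => dist_nonneg)
    linarith
  -- completeness
  · intro F hF
    have hcauchy : ∀ i, i ≤ n → ∀ j, j ≤ m →
        ∃ x : M, Filter.Tendsto (fun u => F u i j) Filter.atTop (nhds x) := by
      intro i hi j hj
      have hK : (0:ℝ) < 4 ^ (i + j) := by positivity
      have hc : CauchySeq (fun u => F u i j) := by
        rw [Metric.cauchySeq_iff]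
        intro ε hε
        obtain ⟨N, hN⟩ := hF (ε / 4 ^ (i + j)) (by positivity)
        refine ⟨N, fun u hu v hv => ?_⟩
        calc dist (F u i j) (F v i j)
            ≤ 4 ^ (i + j) * rhoArr p n m (F u) (F v) :=
              RhoAux.pointwise hd hp n m (F u) (F v) j hj i hi
          _ < 4 ^ (i + j) * (ε / 4 ^ (i + j)) := (mul_lt_mul_iff_right₀ hK).2 (hN u hu v hv)
          _ = ε := by field_simp
      exact cauchySeq_tendsto_of_complete hc
    have hne : Nonempty M := ⟨F 0 0 0⟩
    choose! ξ hξ using hcauchy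
    refine ⟨ξ, ?_⟩
    have hdist : ∀ i, i ≤ n → ∀ j, j ≤ m →
        Filter.Tendsto (fun u => dist (F u i j) (ξ i j)) Filter.atTop (nhds 0) := by
      intro i hi j hj
      exact tendsto_iff_dist_tendsto_zero.1 (hξ i hi j hj)
    have hB1 := hdist 0 (Nat.zero_le _) 0 (Nat.zero_le _)
    have hB2 : Filter.Tendsto (fun u => (∑ i ∈ range n,
        dist (F u (i + 1) 0 + ξ i 0) (F u i 0 + ξ (i + 1) 0) ^ p) ^ (1 / p))
        Filter.atTop (nhds 0) := by
      have hsum : Filter.Tendsto (fun u => ∑ i ∈ range n,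
          dist (F u (i + 1) 0 + ξ i 0) (F u i 0 + ξ (i + 1) 0) ^ p) Filter.atTop (nhds 0) := by
        have hterm : ∀ i ∈ range n, Filter.Tendsto (fun u =>
            dist (F u (i + 1) 0 + ξ i 0) (F u i 0 + ξ (i + 1) 0) ^ p)
            Filter.atTop (nhds 0) := by
          intro i hi
          have hi' := mem_range.1 hi
          have hle : ∀ u, dist (F u (i + 1) 0 + ξ i 0) (F u i 0 + ξ (i + 1) 0)
              ≤ dist (F u (i + 1) 0) (ξ (i + 1) 0) + dist (F u i 0) (ξ i 0) := by
            intro u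
            have h1 := RhoAux.dist_add_add hd (F u (i + 1) 0) (ξ i 0) (ξ (i + 1) 0) (F u i 0)
            rw [add_comm (ξ (i + 1) 0) (F u i 0), dist_comm (ξ i 0)] at h1
            exact h1
          have hz : Filter.Tendsto (fun u => dist (F u (i + 1) 0) (ξ (i + 1) 0)
              + dist (F u i 0) (ξ i 0)) Filter.atTop (nhds 0) := by
            simpa using (hdist (i + 1) hi' 0 (Nat.zero_le _)).add
              (hdist i (le_of_lt hi') 0 (Nat.zero_le _))
          exact (RhoAux.tendsto_rpow_zero hp0).comp
            (squeeze_zero (fun u => dist_nonneg) hle hz)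
        simpa using tendsto_finset_sum (range n) hterm
      exact (RhoAux.tendsto_rpow_zero hip0).comp hsum
    have hB3 : Filter.Tendsto (fun u => (∑ j ∈ range m,
        dist (F u 0 (j + 1) + ξ 0 j) (F u 0 j + ξ 0 (j + 1)) ^ p) ^ (1 / p))
        Filter.atTop (nhds 0) := by
      have hsum : Filter.Tendsto (fun u => ∑ j ∈ range m,
          dist (F u 0 (j + 1) + ξ 0 j) (F u 0 j + ξ 0 (j + 1)) ^ p) Filter.atTop (nhds 0) := by
        have hterm : ∀ j ∈ range m, Filter.Tendsto (fun u =>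
            dist (F u 0 (j + 1) + ξ 0 j) (F u 0 j + ξ 0 (j + 1)) ^ p)
            Filter.atTop (nhds 0) := by
          intro j hj
          have hj' := mem_range.1 hj
          have hle : ∀ u, dist (F u 0 (j + 1) + ξ 0 j) (F u 0 j + ξ 0 (j + 1))
              ≤ dist (F u 0 (j + 1)) (ξ 0 (j + 1)) + dist (F u 0 j) (ξ 0 j) := by
            intro u
            have h1 := RhoAux.dist_add_add hd (F u 0 (j + 1)) (ξ 0 j) (ξ 0 (j + 1)) (F u 0 j)
            rw [add_comm (ξ 0 (j + 1)) (F u 0 j), dist_comm (ξ 0 j)] at h1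
            exact h1
          have hz : Filter.Tendsto (fun u => dist (F u 0 (j + 1)) (ξ 0 (j + 1))
              + dist (F u 0 j) (ξ 0 j)) Filter.atTop (nhds 0) := by
            simpa using (hdist 0 (Nat.zero_le _) (j + 1) hj').add
              (hdist 0 (Nat.zero_le _) j (le_of_lt hj'))
          exact (RhoAux.tendsto_rpow_zero hp0).comp
            (squeeze_zero (fun u => dist_nonneg) hle hz)
        simpa using tendsto_finset_sum (range m) hterm
      exact (RhoAux.tendsto_rpow_zero hip0).comp hsum
    have hB4 : Filter.Tendsto (fun u => (∑ j ∈ range m, ∑ i ∈ range n,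
        dist (F u (i + 1) (j + 1) + F u i j + ξ i (j + 1) + ξ (i + 1) j)
             (F u i (j + 1) + F u (i + 1) j + ξ (i + 1) (j + 1) + ξ i j) ^ p) ^ (1 / p))
        Filter.atTop (nhds 0) := by
      have hsum : Filter.Tendsto (fun u => ∑ j ∈ range m, ∑ i ∈ range n,
          dist (F u (i + 1) (j + 1) + F u i j + ξ i (j + 1) + ξ (i + 1) j)
               (F u i (j + 1) + F u (i + 1) j + ξ (i + 1) (j + 1) + ξ i j) ^ p)
          Filter.atTop (nhds 0) := by
        have houter : ∀ j ∈ range m, Filter.Tendsto (fun u => ∑ i ∈ range n,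
            dist (F u (i + 1) (j + 1) + F u i j + ξ i (j + 1) + ξ (i + 1) j)
                 (F u i (j + 1) + F u (i + 1) j + ξ (i + 1) (j + 1) + ξ i j) ^ p)
            Filter.atTop (nhds 0) := by
          intro j hj
          have hj' := mem_range.1 hj
          have hterm : ∀ i ∈ range n, Filter.Tendsto (fun u =>
              dist (F u (i + 1) (j + 1) + F u i j + ξ i (j + 1) + ξ (i + 1) j)
                   (F u i (j + 1) + F u (i + 1) j + ξ (i + 1) (j + 1) + ξ i j) ^ p)
              Filter.atTop (nhds 0) := by
            intro i hi
            have hi' := mem_range.1 hi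
            have hle : ∀ u,
                dist (F u (i + 1) (j + 1) + F u i j + ξ i (j + 1) + ξ (i + 1) j)
                     (F u i (j + 1) + F u (i + 1) j + ξ (i + 1) (j + 1) + ξ i j)
                ≤ dist (F u (i + 1) (j + 1)) (ξ (i + 1) (j + 1)) + dist (F u i j) (ξ i j)
                  + dist (F u i (j + 1)) (ξ i (j + 1)) + dist (F u (i + 1) j) (ξ (i + 1) j) := by
              intro u
              have h1 := RhoAux.dist4 hd (F u (i + 1) (j + 1)) (F u i j)
                (ξ i (j + 1)) (ξ (i + 1) j)
                (ξ (i + 1) (j + 1)) (ξ i j) (F u i (j + 1)) (F u (i + 1) j)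
              rw [show (ξ (i + 1) (j + 1) + ξ i j + F u i (j + 1) + F u (i + 1) j : M)
                    = F u i (j + 1) + F u (i + 1) j + ξ (i + 1) (j + 1) + ξ i j from by ac_rfl,
                dist_comm (ξ i (j + 1)), dist_comm (ξ (i + 1) j)] at h1
              exact h1
            have hz : Filter.Tendsto (fun u =>
                dist (F u (i + 1) (j + 1)) (ξ (i + 1) (j + 1)) + dist (F u i j) (ξ i j)
                  + dist (F u i (j + 1)) (ξ i (j + 1)) + dist (F u (i + 1) j) (ξ (i + 1) j))
                Filter.atTop (nhds 0) := by
              simpa using (((hdist (i + 1) hi' (j + 1) hj').add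
                (hdist i (le_of_lt hi') j (le_of_lt hj'))).add
                (hdist i (le_of_lt hi') (j + 1) hj')).add
                (hdist (i + 1) hi' j (le_of_lt hj'))
            exact (RhoAux.tendsto_rpow_zero hp0).comp
              (squeeze_zero (fun u => dist_nonneg) hle hz)
          simpa using tendsto_finset_sum (range n) hterm
        simpa using tendsto_finset_sum (range m) houter
      exact (RhoAux.tendsto_rpow_zero hip0).comp hsum
    have htot := ((hB1.add hB2).add hB3).add hB4
    simp only [add_zero] at htot
    simpa only [rhoArr] using htot
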